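/- Good-window decomposition of direct fixed window runs: An infinite weight sequence w : ℕ → ℤ satisfies the direct fixed window mean-payoff objective DFW_mp(λ) (every position j has some l < λ with Σ_{k=j}^{j+l} w(k) ≥ 0) if and only if there exists an infinite increasing sequence of positions 0 = j₀ < j₁ < j₂ < ... with j_{i+1} - j_i ≤ λ such that for every i, the sum Σ_{k=j_i}^{j_{i+1}-1} w(k) ≥ 0 and all intermediate partial sums from j_i are handled by the inductive property, i.e., every window inside [j_i, j_{i+1}] closes by j_{i+1}. -/

import Mathlib

/-- The direct fixed window mean-payoff objective for a weight sequence `w`: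
every position admits a good window of size at most `lam`. -/
def DFWmp (lam : ℕ) (w : ℕ → ℤ) : Prop :=
  ∀ j, ∃ l, l < lam ∧ 0 ≤ ∑ k ∈ Finset.Icc j (j + l), w k

/-- Good-window decomposition: `w` satisfies `DFW_mp(λ)` iff there is an
infinite increasing sequence of positions `0 = j₀ < j₁ < ...`, with gaps at
most `λ`, nonnegative block sums, such that every window inside a block closes
by the end of the block. -/
theorem dfw_good_window_decomposition (w : ℕ → ℤ) (lam : ℕ) (hlam : 1 ≤ lam) :
    DFWmp lam w ↔ ∃ j : ℕ → ℕ, j 0 = 0 ∧ StrictMono j ∧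
      (∀ i, j (i + 1) - j i ≤ lam) ∧
      (∀ i, 0 ≤ ∑ k ∈ Finset.Ico (j i) (j (i + 1)), w k) ∧
      (∀ i p, j i ≤ p → p < j (i + 1) → 0 ≤ ∑ k ∈ Finset.Ico p (j (i + 1)), w k) := by
  constructor
  · intro h
    have key : ∀ j0 : ℕ, ∃ m, j0 < m ∧ m ≤ j0 + lam ∧
        ∀ p, j0 ≤ p → p < m → 0 ≤ ∑ k ∈ Finset.Ico p m, w k := by
      intro j0
      obtain ⟨l, hl, hsum⟩ := h j0
      have hwit : j0 < j0 + l + 1 ∧ 0 ≤ ∑ k ∈ Finset.Ico j0 (j0 + l + 1), w k := by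
        constructor
        · omega
        · rwa [Finset.Ico_add_one_right_eq_Icc]
      classical
      set P : ℕ → Prop := fun m => j0 < m ∧ 0 ≤ ∑ k ∈ Finset.Ico j0 m, w k with hP
      have hex : ∃ m, P m := ⟨j0 + l + 1, hwit⟩
      refine ⟨Nat.find hex, (Nat.find_spec hex).1, ?_, ?_⟩
      · have := Nat.find_min' hex hwit
        omega
      · intro p hp hpm
        rcases eq_or_lt_of_le hp with rfl | hp'
        · exact (Nat.find_spec hex).2
        · have hneg : ¬ P p := Nat.find_min hex hpm
          have hps : ∑ k ∈ Finset.Ico j0 p, w k < 0 := by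
            by_contra hc
            exact hneg ⟨hp', le_of_not_gt hc⟩
          have hsplit : ∑ k ∈ Finset.Ico j0 p, w k + ∑ k ∈ Finset.Ico p (Nat.find hex), w k
              = ∑ k ∈ Finset.Ico j0 (Nat.find hex), w k :=
            Finset.sum_Ico_consecutive _ hp (le_of_lt hpm)
          have := (Nat.find_spec hex).2
          linarith
    choose F hF1 hF2 hF3 using key
    refine ⟨fun i => Nat.rec 0 (fun _ prev => F prev) i, rfl, ?_, ?_, ?_, ?_⟩
    · exact strictMono_nat_of_lt_succ fun i => hF1 _
    · intro i
      dsimp only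
      have := hF2 (Nat.rec 0 (fun _ prev => F prev) i)
      omega
    · intro i
      exact hF3 _ _ le_rfl (hF1 _)
    · intro i p hp hp'
      exact hF3 _ _ hp hp'
  · rintro ⟨j, hj0, hmono, hgap, _, hclose⟩
    intro p
    have hge : ∀ i, i ≤ j i := fun i => hmono.le_apply
    have hne : ∃ i, p < j i := ⟨p + 1, lt_of_lt_of_le (Nat.lt_succ_self p) (hge _)⟩
    classical
    obtain ⟨i, hlt, hmin⟩ : ∃ i, p < j i ∧ ∀ k, k < i → ¬ p < j k :=
      ⟨Nat.find hne, Nat.find_spec hne, fun k hk => Nat.find_min hne hk⟩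
    have hipos : i ≠ 0 := by
      intro h0
      rw [h0, hj0] at hlt; omega
    obtain ⟨i', rfl⟩ := Nat.exists_eq_succ_of_ne_zero hipos
    rw [Nat.succ_eq_add_one] at hlt
    have hle : j i' ≤ p := by
      have := hmin i' (Nat.lt_succ_self i')
      omega
    have hgap' : j (i' + 1) - j i' ≤ lam := hgap i'
    have hmo : j i' < j (i' + 1) := hmono (Nat.lt_succ_self i')
    refine ⟨j (i' + 1) - p - 1, by omega, ?_⟩
    have : Finset.Icc p (p + (j (i' + 1) - p - 1)) = Finset.Ico p (j (i' + 1)) := by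
      rw [← Finset.Ico_add_one_right_eq_Icc]
      congr 1
      omega
    rw [this]
    exact hclose i' p hle hlt
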